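/- Let A, B, T be real numbers with 0 < A < B and T > 0, and set k = (B−A)/T and 𝒯 = T/(AB). Suppose tₙ ∈ (0,T), tₙ₊₁ ∈ (T,2T), lₙ = B − k·tₙ, lₙ₊₁ = A + k·(tₙ₊₁ − T), and vₙ is a real number with vₙ·(tₙ₊₁ − tₙ) = lₙ + lₙ₊₁. Define Iₙ = 𝒯·lₙ·(vₙ − k), Iₙ₊₁ = 𝒯·lₙ₊₁·(vₙ − k), and τ̄ = (vₙ − k)·(tₙ₊₁ − T)/(2A). Then Iₙ₊₁ = Iₙ + 2Ak𝒯·(2τ̄ − 1). -/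

import Mathlib

/-- Momentum-change formula in the adiabatic normal form `P₁` of the piecewise
linear Fermi–Ulam accelerator: `Iₙ₊₁ = Iₙ + 2Ak𝒯(2τ̄ − 1)`. -/
theorem adiabatic_normal_form_momentum_change
    (A B T : ℝ) (hA : 0 < A) (hAB : A < B) (hT : 0 < T)
    (k 𝒯 : ℝ) (hk : k = (B - A) / T) (h𝒯 : 𝒯 = T / (A * B))
    (tn tn1 ln ln1 vn : ℝ)
    (htn0 : 0 < tn) (htnT : tn < T) (htn1T : T < tn1) (htn1 : tn1 < 2 * T)
    (hln : ln = B - k * tn) (hln1 : ln1 = A + k * (tn1 - T))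
    (hfree : vn * (tn1 - tn) = ln + ln1)
    (In In1 τ' : ℝ)
    (hIn : In = 𝒯 * ln * (vn - k)) (hIn1 : In1 = 𝒯 * ln1 * (vn - k))
    (hτ' : τ' = (vn - k) * (tn1 - T) / (2 * A)) :
    In1 = In + 2 * A * k * 𝒯 * (2 * τ' - 1) := by
  have hA0 : A ≠ 0 := hA.ne'
  have hB0 : B ≠ 0 := (hA.trans hAB).ne'
  have hT0 : T ≠ 0 := hT.ne'
  subst hk h𝒯 hln hln1 hIn hIn1 hτ'
  field_simp at hfree ⊢
  linear_combination (-(B-A)) * hfree
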